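/- One-layer ReLU expressibility from all-vert transition matrices: Let m ≥ 1, let B be a nonempty finite index set, and for each β ∈ B let m_β ≥ 1 and P_β be a real m × m_β matrix that is all-vert, meaning every one of its m rows is a vertex of the convex hull of its rows (in particular the rows are pairwise distinct). Then there exist matrices W_β of size m_β × m (for each β ∈ B) and a bias vector b ∈ ℝ^m such that the matrix M defined by M_{i j} = max(0, (Σ_{β ∈ B} P_β W_β)_{i j} + b_j) equals the m × m identity matrix. -/

import Mathlib

open Finset Matrix

/-- Row `i` of the matrix `P` is a vertex of the convex hull of the rows of `P`,
i.e. it does not lie in the convex hull of the other rows. -/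
def IsVertexRow {m n : ℕ} (P : Matrix (Fin m) (Fin n) ℝ) (i : Fin m) : Prop :=
  P i ∉ convexHull ℝ {v | ∃ j, j ≠ i ∧ P j = v}

/-- A matrix is all-vert if every row is a vertex of the convex hull of its rows. -/
def AllVert {m n : ℕ} (P : Matrix (Fin m) (Fin n) ℝ) : Prop :=
  ∀ i, IsVertexRow P i

private lemma clm_apply_eq_sum {n : ℕ} (f : (Fin n → ℝ) →L[ℝ] ℝ) (x : Fin n → ℝ) :
    f x = ∑ k, x k * f (Pi.single k 1) := by
  have hx : x = ∑ k, x k • (Pi.single k 1 : Fin n → ℝ) := by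
    funext j
    simp [Finset.sum_apply, Pi.single_apply, mul_comm]
  calc f x = f (∑ k, x k • (Pi.single k 1 : Fin n → ℝ)) := by rw [← hx]
    _ = ∑ k, x k * f (Pi.single k 1) := by
        rw [map_sum]; simp [smul_eq_mul]

/-- One-layer ReLU expressibility from all-vert transition matrices: if every
`P_β` is all-vert, there exist weights `W_β` and biases `b` such that
`ReLU(Σ_β P_β W_β + 𝟙 bᵀ)` is the identity matrix. -/
theorem relu_one_layer_identity {m : ℕ} (hm : 1 ≤ m)
    {B : Type*} [Fintype B] [Nonempty B]
    (mβ : B → ℕ) (hmβ : ∀ β, 1 ≤ mβ β)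
    (P : ∀ β, Matrix (Fin m) (Fin (mβ β)) ℝ)
    (hP : ∀ β, AllVert (P β)) :
    ∃ (W : ∀ β, Matrix (Fin (mβ β)) (Fin m) ℝ) (b : Fin m → ℝ),
      (Matrix.of fun i j => max 0 ((∑ β, P β * W β) i j + b j)) =
        (1 : Matrix (Fin m) (Fin m) ℝ) := by
  classical
  obtain ⟨β₀⟩ := ‹Nonempty B›
  set Q := P β₀ with hQ
  -- for each j, a separating functional
  have hsep : ∀ j : Fin m, ∃ (f : (Fin (mβ β₀) → ℝ) →L[ℝ] ℝ) (u : ℝ),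
      f (Q j) < u ∧ ∀ i : Fin m, i ≠ j → u < f (Q i) := by
    intro j
    have hfin : (Set.Finite {v | ∃ k, k ≠ j ∧ Q k = v}) := by
      have : {v | ∃ k, k ≠ j ∧ Q k = v} = (fun k => Q k) '' {k | k ≠ j} := by
        ext v; simp only [Set.mem_image, Set.mem_setOf_eq]
      rw [this]
      exact (Set.toFinite _).image _
    obtain ⟨f, u, h1, h2⟩ := geometric_hahn_banach_point_closed
      (convex_convexHull ℝ _) (hfin.isClosed_convexHull (𝕜 := ℝ)) (hP β₀ j)
    refine ⟨f, u, h1, fun i hi => h2 _ (subset_convexHull ℝ _ ⟨i, hi, rfl⟩)⟩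
  choose f u hfu hlt using hsep
  set d : Fin m → ℝ := fun j => u j - f j (Q j) with hd
  have hdpos : ∀ j, 0 < d j := fun j => sub_pos.2 (hfu j)
  set W₀ : Matrix (Fin (mβ β₀)) (Fin m) ℝ :=
    Matrix.of fun k j => - f j (Pi.single k 1) / d j with hW₀
  set Wf : ∀ β, Matrix (Fin (mβ β)) (Fin m) ℝ :=
    Function.update (fun _ => 0) β₀ W₀ with hWf
  refine ⟨Wf, fun j => u j / d j, ?_⟩
  have hsum : (∑ β, P β * Wf β) = Q * W₀ := by
    rw [Finset.sum_eq_single β₀]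
    · simp [hWf]; rfl
    · intro β _ hβ; simp [hWf, Function.update_of_ne hβ]
    · simp
  ext i j
  rw [Matrix.of_apply, hsum]
  have hmul : (Q * W₀) i j = (- f j (Q i)) / d j := by
    rw [Matrix.mul_apply, clm_apply_eq_sum (f j) (Q i), ← Finset.sum_neg_distrib,
      Finset.sum_div]
    exact Finset.sum_congr rfl fun k _ => by simp only [hW₀, Matrix.of_apply]; ring
  have hval : (Q * W₀) i j + u j / d j = (u j - f j (Q i)) / d j := by
    rw [hmul, ← add_div, neg_add_eq_sub]
  rw [hval]
  by_cases hij : i = j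
  · subst hij
    have hone : (u i - f i (Q i)) / d i = 1 := div_self (hdpos i).ne'
    simp [hone, Matrix.one_apply]
  · have h2 : u j < f j (Q i) := hlt j i hij
    have hle : (u j - f j (Q i)) / d j ≤ 0 :=
      div_nonpos_iff.mpr (Or.inr ⟨by linarith, by linarith [hdpos j]⟩)
    simp [Matrix.one_apply, hij, max_eq_left hle]
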